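/- An instance of 3-Partition with 3q integers, all strictly between B/4 and B/2 and summing to qB, is a yes-instance if and only if the instance obtained by adding the three integers B/2 − 2, B/4 + 1, B/4 + 1 (with q+1 target triplets and the same bound B) is a yes-instance, assuming B ≥ 8 and B divisible by 4. -/

import Mathlib

open Finset

lemma filter_eq_map_castLE' {n : ℕ} (p : Fin (n+3) → Prop) [DecidablePred p]
    (hp : ∀ a : Fin (n+3), p a → (a : ℕ) < n) :
    Finset.univ.filter p
      = (Finset.univ.filter (fun k : Fin n => p (Fin.castLE (by omega) k))).map
          (Fin.castLEEmb (by omega)) := by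
  ext a
  simp only [mem_map, mem_filter, mem_univ, true_and, Fin.castLEEmb_apply]
  constructor
  · intro ha
    exact ⟨⟨a, hp a ha⟩, ha, rfl⟩
  · rintro ⟨k, hk, rfl⟩
    exact hk

set_option maxHeartbeats 1000000 in
theorem three_partition_add_triple (q B : ℕ) (hq : 0 < q) (hB : 8 ≤ B)
    (hB4 : 4 ∣ B) (x : Fin (3 * q) → ℕ)
    (hlow : ∀ i, B < 4 * x i) (hhigh : ∀ i, 2 * x i < B)
    (hsum : ∑ i, x i = q * B)
    (y : Fin (3 * q + 3) → ℕ)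
    (hy1 : ∀ (i : Fin (3 * q + 3)) (h : (i : ℕ) < 3 * q), y i = x ⟨i, h⟩)
    (hy2 : y ⟨3 * q, by omega⟩ = B / 2 - 2)
    (hy3 : y ⟨3 * q + 1, by omega⟩ = B / 4 + 1)
    (hy4 : y ⟨3 * q + 2, by omega⟩ = B / 4 + 1) :
    (∃ f : Fin (3 * q) → Fin q, ∀ t : Fin q,
        (Finset.univ.filter (fun i => f i = t)).card = 3 ∧
        ∑ i ∈ Finset.univ.filter (fun i => f i = t), x i = B) ↔
    (∃ g : Fin (3 * q + 3) → Fin (q + 1), ∀ t : Fin (q + 1),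
        (Finset.univ.filter (fun i => g i = t)).card = 3 ∧
        ∑ i ∈ Finset.univ.filter (fun i => g i = t), y i = B) := by
  obtain ⟨nn, hnnval⟩ : ∃ k : Fin (3*q+3), (k : ℕ) = 3*q := ⟨⟨3*q, by omega⟩, rfl⟩
  obtain ⟨n1, hn1val⟩ : ∃ k : Fin (3*q+3), (k : ℕ) = 3*q+1 := ⟨⟨3*q+1, by omega⟩, rfl⟩
  obtain ⟨n2, hn2val⟩ : ∃ k : Fin (3*q+3), (k : ℕ) = 3*q+2 := ⟨⟨3*q+2, by omega⟩, rfl⟩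
  have hynn : y nn = B/2 - 2 := by
    rw [show nn = ⟨3*q, by omega⟩ from Fin.ext hnnval]; exact hy2
  have hyn1 : y n1 = B/4 + 1 := by
    rw [show n1 = ⟨3*q+1, by omega⟩ from Fin.ext hn1val]; exact hy3
  have hyn2 : y n2 = B/4 + 1 := by
    rw [show n2 = ⟨3*q+2, by omega⟩ from Fin.ext hn2val]; exact hy4
  have hxlow : ∀ i, B/4 + 1 ≤ x i := fun i => by have := hlow i; omega
  have hyx : ∀ k : Fin (3*q), y (Fin.castLE (by omega) k) = x k := by
    intro k
    rw [hy1 _ k.isLt]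
    exact congrArg x (Fin.ext rfl)
  have hylow : ∀ k : Fin (3*q+3), k ≠ nn → B/4 + 1 ≤ y k := by
    intro k hk
    by_cases h : (k : ℕ) < 3*q
    · rw [hy1 k h]; exact hxlow _
    · have hkv : (k:ℕ) ≠ 3*q := fun hc => hk (Fin.ext (by omega))
      have : k = n1 ∨ k = n2 := by
        have := k.isLt
        rcases Nat.lt_or_ge (k:ℕ) (3*q+2) with h2 | h2
        · left; exact Fin.ext (by omega)
        · right; exact Fin.ext (by omega)
      rcases this with rfl | rfl
      · omega
      · omega
  have hne01 : nn ≠ n1 := Fin.ne_of_val_ne (by omega)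
  have hne02 : nn ≠ n2 := Fin.ne_of_val_ne (by omega)
  have hne12 : n1 ≠ n2 := Fin.ne_of_val_ne (by omega)
  have hcard3 : ∀ (a b c : Fin (3*q+3)), a ≠ b → a ≠ c → b ≠ c →
      ({a, b, c} : Finset (Fin (3*q+3))).card = 3 := by
    intro a b c hab hac hbc
    rw [card_insert_of_notMem (by simp [hab, hac]),
        card_insert_of_notMem (by simp [hbc]), card_singleton]
  have hsum3 : ∀ (a b c : Fin (3*q+3)), a ≠ b → a ≠ c → b ≠ c →
      ∑ i ∈ ({a, b, c} : Finset (Fin (3*q+3))), y i = y a + y b + y c := by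
    intro a b c hab hac hbc
    rw [sum_insert (by simp [hab, hac]), sum_insert (by simp [hbc]), sum_singleton]
    ring
  constructor
  · rintro ⟨f, hf⟩
    refine ⟨fun i => if h : (i:ℕ) < 3*q then (f ⟨i, h⟩).castSucc else Fin.last q, ?_⟩
    intro t
    induction t using Fin.lastCases with
    | last =>
      have hset : Finset.univ.filter
          (fun i : Fin (3*q+3) =>
            (if h : (i:ℕ) < 3*q then (f ⟨i, h⟩).castSucc else Fin.last q) = Fin.last q)
          = {nn, n1, n2} := by
        ext a
        simp only [mem_filter, mem_univ, true_and, mem_insert, mem_singleton]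
        constructor
        · intro ha
          by_cases h : (a:ℕ) < 3*q
          · rw [dif_pos h] at ha
            exact absurd ha (Fin.castSucc_lt_last _).ne
          · have := a.isLt
            rcases Nat.lt_or_ge (a:ℕ) (3*q+1) with h1 | h1
            · exact Or.inl (Fin.ext (by omega))
            rcases Nat.lt_or_ge (a:ℕ) (3*q+2) with h2 | h2
            · exact Or.inr (Or.inl (Fin.ext (by omega)))
            · exact Or.inr (Or.inr (Fin.ext (by omega)))
        · rintro (rfl | rfl | rfl) <;> rw [dif_neg (by omega)]
      rw [hset]
      refine ⟨hcard3 _ _ _ hne01 hne02 hne12, ?_⟩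
      rw [hsum3 _ _ _ hne01 hne02 hne12, hynn, hyn1, hyn2]
      omega
    | cast s =>
      have key : Finset.univ.filter
          (fun i : Fin (3*q+3) =>
            (if h : (i:ℕ) < 3*q then (f ⟨i, h⟩).castSucc else Fin.last q) = s.castSucc)
          = (Finset.univ.filter (fun k : Fin (3*q) => f k = s)).map
              (Fin.castLEEmb (by omega)) := by
        ext a
        simp only [mem_map, mem_filter, mem_univ, true_and, Fin.castLEEmb_apply]
        constructor
        · intro ha
          have hlt : (a:ℕ) < 3*q := by
            by_contra h
            rw [dif_neg h] at ha
            exact (Fin.castSucc_lt_last s).ne' ha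
          rw [dif_pos hlt] at ha
          exact ⟨⟨a, hlt⟩, Fin.castSucc_inj.mp ha, rfl⟩
        · rintro ⟨k, hk, rfl⟩
          have hlt : ((Fin.castLE (by omega) k : Fin (3*q+3)) : ℕ) < 3*q := k.isLt
          rw [dif_pos hlt]
          rw [Fin.castSucc_inj]
          exact hk
      constructor
      · rw [key, card_map]; exact (hf s).1
      · rw [key, sum_map]
        calc ∑ k ∈ Finset.univ.filter (fun k : Fin (3*q) => f k = s),
              y ((Fin.castLEEmb (by omega)) k)
            = ∑ k ∈ Finset.univ.filter (fun k : Fin (3*q) => f k = s), x k := by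
              refine sum_congr rfl fun k _ => ?_
              exact hyx k
          _ = B := (hf s).2
  · rintro ⟨g, hg⟩
    obtain ⟨t0, ht0⟩ : ∃ t, g nn = t := ⟨_, rfl⟩
    have hmemS : nn ∈ Finset.univ.filter (fun i => g i = t0) := by simp [ht0]
    obtain ⟨i0, j0, hij0, hS0⟩ : ∃ i j, i ≠ j ∧
        (Finset.univ.filter (fun i => g i = t0)).erase nn = {i, j} := by
      apply Finset.card_eq_two.mp
      rw [card_erase_of_mem hmemS, (hg t0).1]
    have hSfull0 : Finset.univ.filter (fun i => g i = t0) = insert nn {i0, j0} := by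
      rw [← hS0, Finset.insert_erase hmemS]
    have hi0nn : i0 ≠ nn := by
      have : i0 ∈ ({i0, j0} : Finset _) := by simp
      rw [← hS0] at this
      exact Finset.ne_of_mem_erase this
    have hj0nn : j0 ≠ nn := by
      have : j0 ∈ ({i0, j0} : Finset _) := by simp
      rw [← hS0] at this
      exact Finset.ne_of_mem_erase this
    have hyi0 : y i0 = B/4 + 1 ∧ y j0 = B/4 + 1 := by
      have hsum0 := (hg t0).2
      rw [hSfull0, hsum3 _ _ _ (Ne.symm hi0nn) (Ne.symm hj0nn) hij0, hynn] at hsum0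
      have h1 := hylow i0 hi0nn
      have h2 := hylow j0 hj0nn
      omega
    obtain ⟨i, j, hij, hiv, hjv, hSfull, hyi, hyj, hinn, hjnn⟩ :
        ∃ i j : Fin (3*q+3), i ≠ j ∧ (i:ℕ) ≠ 3*q+2 ∧ (j:ℕ) ≠ 3*q+1 ∧
          Finset.univ.filter (fun k => g k = t0) = {nn, i, j} ∧
          y i = B/4+1 ∧ y j = B/4+1 ∧ i ≠ nn ∧ j ≠ nn := by
      have hijv : (i0:ℕ) ≠ (j0:ℕ) := fun h => hij0 (Fin.ext h)
      by_cases hcase : (i0:ℕ) = 3*q+2 ∨ (j0:ℕ) = 3*q+1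
      · refine ⟨j0, i0, hij0.symm, by omega, by omega, ?_, hyi0.2, hyi0.1,
          hj0nn, hi0nn⟩
        rw [hSfull0]
        congr 1
        exact Finset.pair_comm i0 j0
      · push_neg at hcase
        exact ⟨i0, j0, hij0, hcase.1, hcase.2, hSfull0, hyi0.1, hyi0.2,
          hi0nn, hj0nn⟩
    have hgi : g i = t0 := by
      have : i ∈ Finset.univ.filter (fun k => g k = t0) := by rw [hSfull]; simp
      simpa using this
    have hgj : g j = t0 := by
      have : j ∈ Finset.univ.filter (fun k => g k = t0) := by rw [hSfull]; simp
      simpa using this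
    have hin2 : i ≠ n2 := fun h => hiv (by rw [h, hn2val])
    have hjn1 : j ≠ n1 := fun h => hjv (by rw [h, hn1val])
    obtain ⟨π, hπdef⟩ : ∃ p : Equiv.Perm (Fin (3*q+3)),
        p = (Equiv.swap i n1).trans (Equiv.swap j n2) := ⟨_, rfl⟩
    have hπn1 : π n1 = i := by
      simp only [hπdef, Equiv.trans_apply, Equiv.swap_apply_right]
      exact Equiv.swap_apply_of_ne_of_ne hij hin2
    have hπn2 : π n2 = j := by
      simp only [hπdef, Equiv.trans_apply]
      rw [Equiv.swap_apply_of_ne_of_ne (Ne.symm hin2) (Ne.symm hne12),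
        Equiv.swap_apply_right]
    have hπi : π i = n1 := by
      simp only [hπdef, Equiv.trans_apply, Equiv.swap_apply_left]
      exact Equiv.swap_apply_of_ne_of_ne (Ne.symm hjn1) hne12
    have hπj : π j = n2 := by
      simp only [hπdef, Equiv.trans_apply]
      rw [Equiv.swap_apply_of_ne_of_ne (Ne.symm hij) hjn1,
        Equiv.swap_apply_left]
    have hπnn : π nn = nn := by
      simp only [hπdef, Equiv.trans_apply]
      rw [Equiv.swap_apply_of_ne_of_ne (Ne.symm hinn) hne01,
        Equiv.swap_apply_of_ne_of_ne (Ne.symm hjnn) hne02]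
    have hπfix : ∀ k, k ≠ i → k ≠ n1 → k ≠ j → k ≠ n2 → π k = k := by
      intro k h1 h2 h3 h4
      simp only [hπdef, Equiv.trans_apply]
      rw [Equiv.swap_apply_of_ne_of_ne h1 h2, Equiv.swap_apply_of_ne_of_ne h3 h4]
    have hyπ : ∀ k, y (π k) = y k := by
      intro k
      rcases eq_or_ne k i with rfl | h1
      · rw [hπi, hyn1, hyi]
      rcases eq_or_ne k n1 with rfl | h2
      · rw [hπn1, hyn1, hyi]
      rcases eq_or_ne k j with rfl | h3
      · rw [hπj, hyn2, hyj]
      rcases eq_or_ne k n2 with rfl | h4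
      · rw [hπn2, hyn2, hyj]
      · rw [hπfix k h1 h2 h3 h4]
    obtain ⟨g', hg'def⟩ : ∃ h : Fin (3*q+3) → Fin (q+1),
        h = fun k => g (π k) := ⟨_, rfl⟩
    have hg'app : ∀ k, g' k = g (π k) := fun k => by rw [hg'def]
    have hfib : ∀ t, Finset.univ.filter (fun k => g' k = t)
        = (Finset.univ.filter (fun k => g k = t)).map π.symm.toEmbedding := by
      intro t
      ext a
      rw [Finset.mem_map_equiv]
      simp [hg'app]
    have hg'card : ∀ t, (Finset.univ.filter (fun k => g' k = t)).card = 3 := by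
      intro t
      rw [hfib, card_map]; exact (hg t).1
    have hg'sum : ∀ t, ∑ k ∈ Finset.univ.filter (fun k => g' k = t), y k = B := by
      intro t
      rw [hfib, sum_map]
      calc ∑ k ∈ Finset.univ.filter (fun k => g k = t), y (π.symm.toEmbedding k)
          = ∑ k ∈ Finset.univ.filter (fun k => g k = t), y k := by
            refine sum_congr rfl fun k _ => ?_
            simpa using (hyπ (π.symm k)).symm
        _ = B := (hg t).2
    have hg'nn : g' nn = t0 := by rw [hg'app, hπnn, ht0]
    have hsub3 : ({nn, n1, n2} : Finset (Fin (3*q+3))) ⊆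
        Finset.univ.filter (fun k => g' k = t0) := by
      intro a ha
      simp only [mem_insert, mem_singleton] at ha
      simp only [mem_filter, mem_univ, true_and]
      rcases ha with rfl | rfl | rfl
      · exact hg'nn
      · rw [hg'app, hπn1]; exact hgi
      · rw [hg'app, hπn2]; exact hgj
    have hfibeq : Finset.univ.filter (fun k => g' k = t0) = {nn, n1, n2} := by
      refine (Finset.eq_of_subset_of_card_le hsub3 ?_).symm
      rw [hg'card t0, hcard3 _ _ _ hne01 hne02 hne12]
    have hne_t0 : ∀ k : Fin (3*q+3), (k:ℕ) < 3*q → g' k ≠ t0 := by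
      intro k hk hc
      have hmem : k ∈ Finset.univ.filter (fun a => g' a = t0) := by simp [hc]
      rw [hfibeq] at hmem
      simp only [mem_insert, mem_singleton] at hmem
      rcases hmem with rfl | rfl | rfl <;> omega
    obtain ⟨e, he⟩ : ∃ e' : Fin (q+1) ≃ Option (Fin q),
        e' = finSuccEquiv' t0 := ⟨_, rfl⟩
    have hsome : ∀ k : Fin (3*q), ∃ s : Fin q,
        e (g' (Fin.castLE (by omega) k)) = some s := by
      intro k
      rcases hzz : e (g' (Fin.castLE (by omega) k)) with _ | s
      · exfalso
        apply hne_t0 (Fin.castLE (by omega) k) k.isLt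
        have h2 := congrArg e.symm hzz
        simpa [he, finSuccEquiv'_symm_none] using h2
      · exact ⟨s, rfl⟩
    choose fs hfs using hsome
    refine ⟨fs, ?_⟩
    intro t
    obtain ⟨t', ht'⟩ : ∃ u, u = e.symm (some t) := ⟨_, rfl⟩
    have ht'ne : t' ≠ t0 := by
      intro hc
      have h1 : e t' = some t := by rw [ht']; simp
      rw [hc, he, finSuccEquiv'_at] at h1
      simp at h1
    have hiff : ∀ k : Fin (3*q), fs k = t ↔ g' (Fin.castLE (by omega) k) = t' := by
      intro k
      have hz : g' (Fin.castLE (by omega) k) = e.symm (some (fs k)) :=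
        (Equiv.eq_symm_apply e).mpr (hfs k)
      constructor
      · intro hk
        subst hk
        rw [ht']
        exact hz
      · intro hk
        have h4 : e.symm (some (fs k)) = e.symm (some t) :=
          hz.symm.trans (hk.trans ht')
        have h5 := e.symm.injective h4
        exact Option.some_injective _ h5
    have hfil : Finset.univ.filter (fun k : Fin (3*q+3) => g' k = t')
        = (Finset.univ.filter (fun k : Fin (3*q) => fs k = t)).map
            (Fin.castLEEmb (by omega)) := by
      ext a
      simp only [mem_map, mem_filter, mem_univ, true_and, Fin.castLEEmb_apply]
      constructor
      · intro ha
        have hlt : (a:ℕ) < 3*q := by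
          by_contra h
          have hmem : a ∈ Finset.univ.filter (fun k => g' k = t0) := by
            rw [hfibeq]
            simp only [mem_insert, mem_singleton]
            have := a.isLt
            rcases Nat.lt_or_ge (a:ℕ) (3*q+1) with h1 | h1
            · exact Or.inl (Fin.ext (by omega))
            rcases Nat.lt_or_ge (a:ℕ) (3*q+2) with h2 | h2
            · exact Or.inr (Or.inl (Fin.ext (by omega)))
            · exact Or.inr (Or.inr (Fin.ext (by omega)))
          have h0 : g' a = t0 := by simpa using hmem
          exact ht'ne (ha.symm.trans h0)
        refine ⟨⟨a, hlt⟩, ?_, rfl⟩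
        rw [hiff]
        exact ha
      · rintro ⟨k, hk, rfl⟩
        exact (hiff k).mp hk
    constructor
    · have h := hg'card t'
      rw [hfil, card_map] at h
      exact h
    · have h := hg'sum t'
      rw [hfil, sum_map] at h
      rw [← h]
      refine sum_congr rfl fun k _ => ?_
      exact (hyx k).symm
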